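/- GME of the qubit Lambda network: let p₁, p₂ ∈ [0,1] with p₁·p₂ > 1/3, and consider the four-qubit state ρ_{p₁} ⊗ ρ_{p₂}, where ρ_{p₁} is the 2-dimensional isotropic state on qubits A₁B and ρ_{p₂} on qubits A₂C. Regarded as a tripartite state of parties A (holding qubits A₁ and A₂), B, and C, this state is genuinely multipartite entangled, i.e. it is not biseparable with respect to the party bipartitions A|BC, B|AC, C|AB. -/

import Mathlib

open Matrix Finset
open scoped ComplexOrder

attribute [local instance] Classical.propDecidable

noncomputable section

/-- The rank-one matrix `|v⟩⟨v|` associated to a vector `v`. -/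
def vecProj {D : Type*} [Fintype D] (v : D → ℂ) : Matrix D D ℂ :=
  Matrix.of fun i j => v i * star (v j)

/-- `v` is a unit vector. -/
def UnitVec {D : Type*} [Fintype D] (v : D → ℂ) : Prop :=
  ∑ i, star (v i) * v i = 1

/-- A quantum state: positive semidefinite matrix of trace one. -/
def IsState {D : Type*} [Fintype D] [DecidableEq D] (ρ : Matrix D D ℂ) : Prop :=
  ρ.PosSemidef ∧ ρ.trace = 1

/-- The maximally entangled vector `(1/√d) ∑ᵢ |ii⟩` on `ℂ^d ⊗ ℂ^d`. -/
def maxEntVec (d : ℕ) : Fin d × Fin d → ℂ :=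
  fun q => if q.1 = q.2 then (((Real.sqrt d)⁻¹ : ℝ) : ℂ) else 0

/-- The `d`-dimensional isotropic state with visibility `p`:
`ρ_p = p·φ_d⁺ + (1-p)·𝟙/d²`. -/
def isoState (d : ℕ) (p : ℝ) : Matrix (Fin d × Fin d) (Fin d × Fin d) ℂ :=
  (p : ℂ) • vecProj (maxEntVec d) +
    ((((1 - p) / (d ^ 2 : ℝ)) : ℝ) : ℂ) •
      (1 : Matrix (Fin d × Fin d) (Fin d × Fin d) ℂ)

/-- A vector on a tripartite system `α × β × γ` is product across one of the three
bipartitions of the parties. -/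
def ProdAcross3 {α β γ : Type*} (v : α × β × γ → ℂ) : Prop :=
  (∃ (f : α → ℂ) (g : β × γ → ℂ), ∀ q, v q = f q.1 * g q.2) ∨
  (∃ (f : β → ℂ) (g : α × γ → ℂ), ∀ q, v q = f q.2.1 * g (q.1, q.2.2)) ∨
  (∃ (f : γ → ℂ) (g : α × β → ℂ), ∀ q, v q = f q.2.2 * g (q.1, q.2.1))

/-- Biseparability of a tripartite state with parties `α`, `β`, `γ`. -/
def Bisep3 {α β γ : Type*} [Fintype α] [Fintype β] [Fintype γ]
    (ρ : Matrix (α × β × γ) (α × β × γ) ℂ) : Prop :=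
  ∃ (m : ℕ) (w : Fin m → ℝ) (u : Fin m → α × β × γ → ℂ),
    (∀ k, 0 ≤ w k) ∧ (∑ k, w k = 1) ∧
    (∀ k, UnitVec (u k) ∧ ProdAcross3 (u k)) ∧
    ρ = ∑ k, (w k : ℂ) • vecProj (u k)

/-- The Lambda network state: an isotropic state `ρ_{p₁}` on subsystems `A₁B` tensored
with an isotropic state `ρ_{p₂}` on subsystems `A₂C`, with indices grouped by party as
`(A₁ × A₂) × B × C`. -/
def lambdaNet (d : ℕ) (p₁ p₂ : ℝ) :
    Matrix ((Fin d × Fin d) × Fin d × Fin d) ((Fin d × Fin d) × Fin d × Fin d) ℂ :=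
  Matrix.of fun x y =>
    isoState d p₁ (x.1.1, x.2.1) (y.1.1, y.2.1) *
    isoState d p₂ (x.1.2, x.2.2) (y.1.2, y.2.2)


abbrev QD := (Fin 2 × Fin 2) × Fin 2 × Fin 2

def Sone (u : QD → ℂ) : ℝ :=
  ∑ q : Fin 2 × Fin 2, Complex.normSq (u ((0, q.1), 0, q.2) + u ((1, q.1), 1, q.2))
def Stwo (u : QD → ℂ) : ℝ :=
  ∑ q : Fin 2 × Fin 2, Complex.normSq (u ((q.1, 0), q.2, 0) + u ((q.1, 1), q.2, 1))
def Sthree (u : QD → ℂ) : ℝ :=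
  Complex.normSq (u ((0,0),0,0) + u ((0,1),0,1) + u ((1,0),1,0) + u ((1,1),1,1))
def Nn (u : QD → ℂ) : ℝ := ∑ x, Complex.normSq (u x)

open Complex in
lemma myCS {ι : Type*} (s : Finset ι) (f g : ι → ℂ) :
    normSq (∑ i ∈ s, f i * g i) ≤ (∑ i ∈ s, normSq (f i)) * ∑ i ∈ s, normSq (g i) := by
  have h1 : ‖∑ i ∈ s, f i * g i‖ ≤ ∑ i ∈ s, ‖f i‖ * ‖g i‖ := by
    refine le_trans (norm_sum_le _ _) ?_
    simp [norm_mul, le_refl]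
  have h2 := Finset.sum_mul_sq_le_sq_mul_sq s (fun i => ‖f i‖) (fun i => ‖g i‖)
  have h3 : ‖∑ i ∈ s, f i * g i‖ ^ 2 ≤ (∑ i ∈ s, ‖f i‖ * ‖g i‖) ^ 2 :=
    pow_le_pow_left₀ (norm_nonneg _) h1 2
  calc normSq (∑ i ∈ s, f i * g i) = ‖∑ i ∈ s, f i * g i‖ ^ 2 := (Complex.sq_norm _).symm
    _ ≤ (∑ i ∈ s, ‖f i‖ * ‖g i‖) ^ 2 := h3
    _ ≤ (∑ i ∈ s, ‖f i‖ ^ 2) * ∑ i ∈ s, ‖g i‖ ^ 2 := h2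
    _ = _ := by simp [Complex.sq_norm]

open Complex in
lemma nsq_add_le (x y : ℂ) : normSq (x + y) ≤ 2 * normSq x + 2 * normSq y := by
  simp only [Complex.normSq_apply, Complex.add_re, Complex.add_im]
  nlinarith [sq_nonneg (x.re - y.re), sq_nonneg (x.im - y.im)]

open Complex in
lemma Sthree_le_two_Sone (u : QD → ℂ) : Sthree u ≤ 2 * Sone u := by
  have h : u ((0,0),0,0) + u ((0,1),0,1) + u ((1,0),1,0) + u ((1,1),1,1)
      = (u ((0,0),0,0) + u ((1,0),1,0)) + (u ((0,1),0,1) + u ((1,1),1,1)) := by ring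
  have h2 := nsq_add_le (u ((0,0),0,0) + u ((1,0),1,0)) (u ((0,1),0,1) + u ((1,1),1,1))
  have h3 : Sone u = normSq (u ((0,0),0,0) + u ((1,0),1,0))
      + normSq (u ((0,1),0,1) + u ((1,1),1,1))
      + normSq (u ((0,0),0,1) + u ((1,0),1,1)) + normSq (u ((0,1),0,0) + u ((1,1),1,0)) := by
    simp [Sone, Fintype.sum_prod_type, Fin.sum_univ_two]; ring
  simp only [Sthree, h]
  nlinarith [h2, normSq_nonneg (u ((0,0),0,1) + u ((1,0),1,1)),
    normSq_nonneg (u ((0,1),0,0) + u ((1,1),1,0))]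

open Complex in
lemma Sthree_le_two_Stwo (u : QD → ℂ) : Sthree u ≤ 2 * Stwo u := by
  have h : u ((0,0),0,0) + u ((0,1),0,1) + u ((1,0),1,0) + u ((1,1),1,1)
      = (u ((0,0),0,0) + u ((0,1),0,1)) + (u ((1,0),1,0) + u ((1,1),1,1)) := by ring
  have h2 := nsq_add_le (u ((0,0),0,0) + u ((0,1),0,1)) (u ((1,0),1,0) + u ((1,1),1,1))
  have h3 : Stwo u = normSq (u ((0,0),0,0) + u ((0,1),0,1))
      + normSq (u ((1,0),1,0) + u ((1,1),1,1))
      + normSq (u ((0,0),1,0) + u ((0,1),1,1)) + normSq (u ((1,0),0,0) + u ((1,1),0,1)) := by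
    simp [Stwo, Fintype.sum_prod_type, Fin.sum_univ_two]; ring
  simp only [Sthree, h]
  nlinarith [h2, normSq_nonneg (u ((0,0),1,0) + u ((0,1),1,1)),
    normSq_nonneg (u ((1,0),0,0) + u ((1,1),0,1))]

open Complex in
lemma cutA (u : QD → ℂ) (f : Fin 2 × Fin 2 → ℂ) (g : Fin 2 × Fin 2 → ℂ)
    (hu : ∀ q, u q = f q.1 * g q.2) (hN : Nn u = 1) :
    0 ≤ 1 + Sone u + Stwo u - 2 * Sthree u := by
  have ha : u ((0,0),0,0) + u ((0,1),0,1) + u ((1,0),1,0) + u ((1,1),1,1)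
      = ∑ q : Fin 2 × Fin 2, f q * g q := by
    simp [hu, Fintype.sum_prod_type, Fin.sum_univ_two]; ring
  have hNN : Nn u = (∑ p : Fin 2 × Fin 2, normSq (f p)) * ∑ r : Fin 2 × Fin 2, normSq (g r) := by
    simp [Nn, hu, Fintype.sum_prod_type, Fin.sum_univ_two, Complex.normSq_mul]; ring
  have h3 : Sthree u ≤ 1 := by
    rw [Sthree, ha, ← hN, hNN]
    exact myCS Finset.univ f g
  have h1 := Sthree_le_two_Sone u
  have h2 := Sthree_le_two_Stwo u
  linarith

open Complex in
lemma cutB (u : QD → ℂ) (f : Fin 2 → ℂ) (g : (Fin 2 × Fin 2) × Fin 2 → ℂ)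
    (hu : ∀ q, u q = f q.2.1 * g (q.1, q.2.2)) (hN : Nn u = 1) :
    0 ≤ 1 + Sone u + Stwo u - 2 * Sthree u := by
  set h : Fin 2 → ℂ := fun a => g ((a,0),0) + g ((a,1),1) with hh
  have e : ∀ a₁ b : Fin 2, u ((a₁,0),b,0) + u ((a₁,1),b,1) = f b * h a₁ := by
    intro a₁ b; simp [hu, hh]; ring
  have hS2 : Stwo u = (∑ b, normSq (f b)) * ∑ a, normSq (h a) := by
    simp [Stwo, Fintype.sum_prod_type, e, Complex.normSq_mul, Fin.sum_univ_two]; ring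
  have ha : u ((0,0),0,0) + u ((0,1),0,1) + u ((1,0),1,0) + u ((1,1),1,1)
      = ∑ a : Fin 2, f a * h a := by
    simp [hu, hh, Fin.sum_univ_two]; ring
  have hS3 : Sthree u ≤ Stwo u := by
    rw [Sthree, ha, hS2]; exact myCS Finset.univ f h
  have hNN : Nn u = (∑ b, normSq (f b)) * ∑ x : (Fin 2 × Fin 2) × Fin 2, normSq (g x) := by
    simp [Nn, hu, Fintype.sum_prod_type, Fin.sum_univ_two, Complex.normSq_mul]; ring
  have hH : ∑ a, normSq (h a) ≤ 2 * ∑ x : (Fin 2 × Fin 2) × Fin 2, normSq (g x) := by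
    have e1 := nsq_add_le (g ((0,0),0)) (g ((0,1),1))
    have e2 := nsq_add_le (g ((1,0),0)) (g ((1,1),1))
    simp only [hh, Fin.sum_univ_two, Fintype.sum_prod_type]
    nlinarith [normSq_nonneg (g ((0,0),1)), normSq_nonneg (g ((0,1),0)),
      normSq_nonneg (g ((1,0),1)), normSq_nonneg (g ((1,1),0))]
  have hF : 0 ≤ ∑ b, normSq (f b) := Finset.sum_nonneg fun _ _ => normSq_nonneg _
  have hS2le : Stwo u ≤ 2 := by
    rw [hS2]
    calc (∑ b, normSq (f b)) * ∑ a, normSq (h a)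
        ≤ (∑ b, normSq (f b)) * (2 * ∑ x : (Fin 2 × Fin 2) × Fin 2, normSq (g x)) :=
          mul_le_mul_of_nonneg_left hH hF
      _ = 2 * Nn u := by rw [hNN]; ring
      _ = 2 := by rw [hN]; norm_num
  have h1 := Sthree_le_two_Sone u
  linarith

open Complex in
lemma cutC (u : QD → ℂ) (f : Fin 2 → ℂ) (g : (Fin 2 × Fin 2) × Fin 2 → ℂ)
    (hu : ∀ q, u q = f q.2.2 * g (q.1, q.2.1)) (hN : Nn u = 1) :
    0 ≤ 1 + Sone u + Stwo u - 2 * Sthree u := by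
  set k : Fin 2 → ℂ := fun b => g ((0,b),0) + g ((1,b),1) with hk
  have e : ∀ a₂ c : Fin 2, u ((0,a₂),0,c) + u ((1,a₂),1,c) = f c * k a₂ := by
    intro a₂ c; simp [hu, hk]; ring
  have hS1 : Sone u = (∑ c, normSq (f c)) * ∑ a, normSq (k a) := by
    simp [Sone, Fintype.sum_prod_type, e, Complex.normSq_mul, Fin.sum_univ_two]; ring
  have ha : u ((0,0),0,0) + u ((0,1),0,1) + u ((1,0),1,0) + u ((1,1),1,1)
      = ∑ b : Fin 2, f b * k b := by
    simp [hu, hk, Fin.sum_univ_two]; ring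
  have hS3 : Sthree u ≤ Sone u := by
    rw [Sthree, ha, hS1]; exact myCS Finset.univ f k
  have hNN : Nn u = (∑ c, normSq (f c)) * ∑ x : (Fin 2 × Fin 2) × Fin 2, normSq (g x) := by
    simp [Nn, hu, Fintype.sum_prod_type, Fin.sum_univ_two, Complex.normSq_mul]; ring
  have hK : ∑ a, normSq (k a) ≤ 2 * ∑ x : (Fin 2 × Fin 2) × Fin 2, normSq (g x) := by
    have e1 := nsq_add_le (g ((0,0),0)) (g ((1,0),1))
    have e2 := nsq_add_le (g ((0,1),0)) (g ((1,1),1))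
    simp only [hk, Fin.sum_univ_two, Fintype.sum_prod_type]
    nlinarith [normSq_nonneg (g ((0,0),1)), normSq_nonneg (g ((0,1),1)),
      normSq_nonneg (g ((1,0),0)), normSq_nonneg (g ((1,1),0))]
  have hF : 0 ≤ ∑ c, normSq (f c) := Finset.sum_nonneg fun _ _ => normSq_nonneg _
  have hS1le : Sone u ≤ 2 := by
    rw [hS1]
    calc (∑ c, normSq (f c)) * ∑ a, normSq (k a)
        ≤ (∑ c, normSq (f c)) * (2 * ∑ x : (Fin 2 × Fin 2) × Fin 2, normSq (g x)) :=
          mul_le_mul_of_nonneg_left hK hF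
      _ = 2 * Nn u := by rw [hNN]; ring
      _ = 2 := by rw [hN]; norm_num
  have h2 := Sthree_le_two_Stwo u
  linarith

def Tf (σ : Matrix QD QD ℂ) : ℂ :=
  ∑ q : QD,
    (σ q q
      + σ ((q.1.1, q.2.1), q.1.1, q.2.2) ((q.1.2, q.2.1), q.1.2, q.2.2)
      + σ ((q.2.1, q.1.1), q.2.2, q.1.1) ((q.2.1, q.1.2), q.2.2, q.1.2)
      - 2 * σ ((q.1.1, q.1.2), q.1.1, q.1.2) ((q.2.1, q.2.2), q.2.1, q.2.2))

lemma Tf_sum {m : ℕ} (w : Fin m → ℝ) (M : Fin m → Matrix QD QD ℂ) :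
    Tf (∑ k, (w k : ℂ) • M k) = ∑ k, (w k : ℂ) * Tf (M k) := by
  have step : Tf (∑ k, (w k : ℂ) • M k)
      = ∑ q : QD, ∑ k, (w k : ℂ) *
        (M k q q
          + M k ((q.1.1, q.2.1), q.1.1, q.2.2) ((q.1.2, q.2.1), q.1.2, q.2.2)
          + M k ((q.2.1, q.1.1), q.2.2, q.1.1) ((q.2.1, q.1.2), q.2.2, q.1.2)
          - 2 * M k ((q.1.1, q.1.2), q.1.1, q.1.2) ((q.2.1, q.2.2), q.2.1, q.2.2)) := by
    refine Finset.sum_congr rfl fun q _ => ?_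
    simp only [Matrix.sum_apply, Matrix.smul_apply, smul_eq_mul, Finset.mul_sum,
      ← Finset.sum_add_distrib, ← Finset.sum_sub_distrib]
    exact Finset.sum_congr rfl fun k _ => by ring
  rw [step, Finset.sum_comm]
  refine Finset.sum_congr rfl fun k _ => ?_
  rw [← Finset.mul_sum]
  rfl

lemma Tf_vecProj (u : QD → ℂ) :
    Tf (vecProj u) = ((Nn u + Sone u + Stwo u - 2 * Sthree u : ℝ) : ℂ) := by
  simp only [Tf, vecProj, Matrix.of_apply, Complex.star_def, Nn, Sone, Stwo, Sthree]
  push_cast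
  simp only [← Complex.mul_conj]
  simp only [Fintype.sum_prod_type, Fin.sum_univ_two, map_add]
  ring

lemma iso_apply (p : ℝ) (q r : Fin 2 × Fin 2) :
    isoState 2 p q r = (if q.1 = q.2 ∧ r.1 = r.2 then (p : ℂ) / 2 else 0)
      + (if q = r then (((1 - p : ℝ)) : ℂ) / 4 else 0) := by
  have hs : ((Real.sqrt 2)⁻¹ : ℝ) * (Real.sqrt 2)⁻¹ = 2⁻¹ := by
    rw [← mul_inv]
    rw [Real.mul_self_sqrt (by norm_num : (0:ℝ) ≤ 2)]
  have hs2 : (((Real.sqrt 2 : ℝ)) : ℂ)⁻¹ * (((Real.sqrt 2 : ℝ)) : ℂ)⁻¹ = 1 / 2 := by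
    rw [← Complex.ofReal_inv, ← Complex.ofReal_mul]
    rw [hs]; norm_num
  simp only [isoState, vecProj, maxEntVec, Matrix.add_apply, Matrix.smul_apply,
    Matrix.of_apply, Matrix.one_apply, smul_eq_mul]
  by_cases h1 : q.1 = q.2 <;> by_cases h2 : r.1 = r.2 <;> by_cases h3 : q = r <;>
    simp [h1, h2, h3, Complex.star_def, Complex.conj_ofReal] <;>
    (try rw [hs2]) <;> ring

lemma Tf_lambda (p₁ p₂ : ℝ) :
    Tf (lambdaNet 2 p₁ p₂) = (((3 - 9 * (p₁ * p₂)) / 2 : ℝ) : ℂ) := by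
  simp only [Tf, lambdaNet, Matrix.of_apply, iso_apply]
  simp only [Fintype.sum_prod_type, Fin.sum_univ_two]
  norm_num [Prod.ext_iff]
  push_cast
  ring


/-- **GME of the qubit Lambda network.** If `p₁ p₂ > 1/3`, the Lambda network of
2-dimensional isotropic states, viewed as a tripartite state of `A = (A₁, A₂)`, `B`,
`C`, is genuinely multipartite entangled. -/
theorem lambda_network_GME (p₁ p₂ : ℝ)
    (h₁ : p₁ ∈ Set.Icc (0 : ℝ) 1) (h₂ : p₂ ∈ Set.Icc (0 : ℝ) 1)
    (hp : 1 / 3 < p₁ * p₂) :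
    ¬ Bisep3 (lambdaNet 2 p₁ p₂) := by
  rintro ⟨m, w, u, hw0, hw1, hps, heq⟩
  have hT := Tf_lambda p₁ p₂
  rw [heq, Tf_sum] at hT
  have hNu : ∀ k, Nn (u k) = 1 := by
    intro k
    have h := (hps k).1
    have h2 : ((Nn (u k) : ℝ) : ℂ) = 1 := by
      rw [← h]
      push_cast [Nn]
      exact Finset.sum_congr rfl fun x _ => by
        rw [Complex.normSq_eq_conj_mul_self]; rfl
    exact_mod_cast h2
  have ht : ∀ k, Tf (vecProj (u k))
      = ((1 + Sone (u k) + Stwo (u k) - 2 * Sthree (u k) : ℝ) : ℂ) := by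
    intro k; rw [Tf_vecProj, hNu k]
  have hnn : ∀ k, 0 ≤ 1 + Sone (u k) + Stwo (u k) - 2 * Sthree (u k) := by
    intro k
    rcases (hps k).2 with ⟨f, g, hu⟩ | ⟨f, g, hu⟩ | ⟨f, g, hu⟩
    · exact cutA _ f g hu (hNu k)
    · exact cutB _ f g hu (hNu k)
    · exact cutC _ f g hu (hNu k)
  simp only [ht] at hT
  have hR : ∑ k, w k * (1 + Sone (u k) + Stwo (u k) - 2 * Sthree (u k))
      = (3 - 9 * (p₁ * p₂)) / 2 := by exact_mod_cast hT
  have hge : 0 ≤ ∑ k, w k * (1 + Sone (u k) + Stwo (u k) - 2 * Sthree (u k)) :=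
    Finset.sum_nonneg fun k _ => mul_nonneg (hw0 k) (hnn k)
  rw [hR] at hge
  linarith
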